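/- Let Y, Z1, Z2, Z3, Z4 ∈ ℝ³ and suppose ⟨Y Zi Zj⟩ ≠ 0 for all i ≠ j in {1,2,3,4}. Then ⟨Z1 Z2 Z3⟩²/(⟨Y Z1 Z2⟩·⟨Y Z2 Z3⟩·⟨Y Z3 Z1⟩) + ⟨Z1 Z3 Z4⟩²/(⟨Y Z1 Z3⟩·⟨Y Z3 Z4⟩·⟨Y Z4 Z1⟩) = ⟨Z1 Z2 Z4⟩²/(⟨Y Z1 Z2⟩·⟨Y Z2 Z4⟩·⟨Y Z4 Z1⟩) + ⟨Z2 Z3 Z4⟩²/(⟨Y Z2 Z3⟩·⟨Y Z3 Z4⟩·⟨Y Z4 Z2⟩). -/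

import Mathlib

/-- The 3×3 determinant of the matrix with rows `a`, `b`, `c`. -/
noncomputable def det3 (a b c : Fin 3 → ℝ) : ℝ := Matrix.det (Matrix.of ![a, b, c])

lemma det3_eq (a b c : Fin 3 → ℝ) :
    det3 a b c = a 0 * (b 1 * c 2 - b 2 * c 1) - a 1 * (b 0 * c 2 - b 2 * c 0)
      + a 2 * (b 0 * c 1 - b 1 * c 0) := by
  simp [det3, Matrix.det_fin_three]; ring

lemma det3_swap (a b c : Fin 3 → ℝ) : det3 a c b = - det3 a b c := by
  simp only [det3_eq]; ring

/-- Plücker relation. -/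
lemma pluecker (Y a b c d : Fin 3 → ℝ) :
    det3 Y a b * det3 Y c d - det3 Y a c * det3 Y b d + det3 Y a d * det3 Y b c = 0 := by
  simp only [det3_eq]; ring

/-- Cramer-type relation. -/
lemma cramer (Y a b c d : Fin 3 → ℝ) :
    det3 a b c * det3 Y a d =
      det3 Y a c * det3 a b d - det3 Y a b * det3 a c d := by
  simp only [det3_eq]; ring

lemma cramer' (Y a b c d : Fin 3 → ℝ) :
    det3 b c d * det3 Y a d =
      det3 Y b d * det3 a c d - det3 Y c d * det3 a b d := by
  simp only [det3_eq]; ring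

lemma key (q01 q02 q03 q12 q13 q23 p012 p013 p023 p123 : ℝ)
    (h01 : q01 ≠ 0) (h02 : q02 ≠ 0) (h03 : q03 ≠ 0)
    (h12 : q12 ≠ 0) (h13 : q13 ≠ 0) (h23 : q23 ≠ 0)
    (hP : q01 * q23 - q02 * q13 + q03 * q12 = 0)
    (hA : p012 * q03 = q02 * p013 - q01 * p023)
    (hB : p123 * q03 = q13 * p023 - q23 * p013) :
    p012 ^ 2 / (q01 * q12 * -q02) + p023 ^ 2 / (q02 * q23 * -q03) =
      p013 ^ 2 / (q01 * q13 * -q03) + p123 ^ 2 / (q12 * q23 * -q13) := by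
  have E : p012 ^ 2 * q03 * q13 * q23 + p023 ^ 2 * q01 * q12 * q13
      - p013 ^ 2 * q02 * q12 * q23 - p123 ^ 2 * q01 * q02 * q03 = 0 := by
    have hE3 : (p012 ^ 2 * q03 * q13 * q23 + p023 ^ 2 * q01 * q12 * q13
        - p013 ^ 2 * q02 * q12 * q23 - p123 ^ 2 * q01 * q02 * q03) * q03 = 0 := by
      linear_combination q13 * q23 * (p012 * q03 + q02 * p013 - q01 * p023) * hA
        - q01 * q02 * (p123 * q03 + q13 * p023 - q23 * p013) * hB
        + (q01 * q13 * p023 ^ 2 - q02 * q23 * p013 ^ 2) * hP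
    exact (mul_eq_zero.mp hE3).resolve_right h03
  field_simp
  linear_combination (-1 : ℝ) * E

theorem stmt_8 (Y : Fin 3 → ℝ) (Z : Fin 4 → (Fin 3 → ℝ))
    (h : ∀ i j : Fin 4, i ≠ j → det3 Y (Z i) (Z j) ≠ 0) :
    det3 (Z 0) (Z 1) (Z 2) ^ 2 /
        (det3 Y (Z 0) (Z 1) * det3 Y (Z 1) (Z 2) * det3 Y (Z 2) (Z 0)) +
      det3 (Z 0) (Z 2) (Z 3) ^ 2 /
        (det3 Y (Z 0) (Z 2) * det3 Y (Z 2) (Z 3) * det3 Y (Z 3) (Z 0)) =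
    det3 (Z 0) (Z 1) (Z 3) ^ 2 /
        (det3 Y (Z 0) (Z 1) * det3 Y (Z 1) (Z 3) * det3 Y (Z 3) (Z 0)) +
      det3 (Z 1) (Z 2) (Z 3) ^ 2 /
        (det3 Y (Z 1) (Z 2) * det3 Y (Z 2) (Z 3) * det3 Y (Z 3) (Z 1)) := by
  have e20 : det3 Y (Z 2) (Z 0) = - det3 Y (Z 0) (Z 2) := by
    rw [det3_swap]
  have e30 : det3 Y (Z 3) (Z 0) = - det3 Y (Z 0) (Z 3) := by
    rw [det3_swap]
  have e31 : det3 Y (Z 3) (Z 1) = - det3 Y (Z 1) (Z 3) := by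
    rw [det3_swap]
  rw [e20, e30, e31]
  -- reorder denominators to match `key`
  have r2 : det3 Y (Z 0) (Z 2) * det3 Y (Z 2) (Z 3) * -det3 Y (Z 0) (Z 3)
      = det3 Y (Z 0) (Z 2) * det3 Y (Z 2) (Z 3) * -det3 Y (Z 0) (Z 3) := rfl
  apply key (det3 Y (Z 0) (Z 1)) (det3 Y (Z 0) (Z 2)) (det3 Y (Z 0) (Z 3))
    (det3 Y (Z 1) (Z 2)) (det3 Y (Z 1) (Z 3)) (det3 Y (Z 2) (Z 3))
    (det3 (Z 0) (Z 1) (Z 2)) (det3 (Z 0) (Z 1) (Z 3)) (det3 (Z 0) (Z 2) (Z 3))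
    (det3 (Z 1) (Z 2) (Z 3))
    (h 0 1 (by decide)) (h 0 2 (by decide)) (h 0 3 (by decide))
    (h 1 2 (by decide)) (h 1 3 (by decide)) (h 2 3 (by decide))
  · exact pluecker Y (Z 0) (Z 1) (Z 2) (Z 3)
  · exact cramer Y (Z 0) (Z 1) (Z 2) (Z 3)
  · exact cramer' Y (Z 0) (Z 1) (Z 2) (Z 3)
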